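/- arXiv:1407.3005 — 5 statements merged into one kernel-verified Lean document; each statement's English description precedes it below -/
import Mathlib

section
/- Let (Λ, ν) be a measure space, let n ≥ 2, and let μ_0, μ_1, …, μ_n : Λ → ℝ be measurable functions with μ_j ≥ 0 pointwise and ∫ μ_j dν = 1 for every j. For each pair 1 ≤ j1 < j2 ≤ n, let ξ^{(j1,j2)}_0, ξ^{(j1,j2)}_1, ξ^{(j1,j2)}_2 : Λ → ℝ be measurable functions with ξ^{(j1,j2)}_i ≥ 0 pointwise and ξ^{(j1,j2)}_0(λ) + ξ^{(j1,j2)}_1(λ) + ξ^{(j1,j2)}_2(λ) = 1 for all λ ∈ Λ. Then ∑_{j=1}^{n} ∫ min(μ_0, μ_j) dν ≤ 1 + ∑_{1 ≤ j1 < j2 ≤ n} ( ∫ ξ^{(j1,j2)}_0 μ_0 dν + ∫ ξ^{(j1,j2)}_1 μ_{j1} dν + ∫ ξ^{(j1,j2)}_2 μ_{j2} dν ). -/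
open MeasureTheory

/-- Combinatorial core: if `0 ≤ c j ≤ a` on `Icc 1 n`, then the sum of the `c j` is at most
`a` plus the sum over pairs of the pairwise minima. -/
lemma lemma1_aux_comb (n : ℕ) (hn : 2 ≤ n) (a : ℝ) (c : ℕ → ℝ)
    (hc0 : ∀ j ∈ Finset.Icc 1 n, 0 ≤ c j) (hca : ∀ j ∈ Finset.Icc 1 n, c j ≤ a) :
    ∑ j ∈ Finset.Icc 1 n, c j ≤
      a + ∑ j1 ∈ Finset.Icc 1 n, ∑ j2 ∈ Finset.Ioc j1 n, min (c j1) (c j2) := by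
  classical
  obtain ⟨m, hm, hmax⟩ := Finset.exists_max_image (Finset.Icc 1 n) c
    ⟨1, by simp; omega⟩
  have hm1 : 1 ≤ m := (Finset.mem_Icc.1 hm).1
  have hmn : m ≤ n := (Finset.mem_Icc.1 hm).2
  set e : ℕ → (Σ _ : ℕ, ℕ) := fun j => if j < m then ⟨j, m⟩ else ⟨m, j⟩ with he
  have hinj : Set.InjOn e ((Finset.Icc 1 n).erase m) := by
    intro i hi j hj hij
    have him : i ≠ m := Finset.ne_of_mem_erase hi
    have hjm : j ≠ m := Finset.ne_of_mem_erase hj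
    simp only [he] at hij
    by_cases h1 : i < m <;> by_cases h2 : j < m <;>
      simp [h1, h2, Sigma.mk.inj_iff] at hij <;> omega
  have hsum_pairs : ∑ j ∈ (Finset.Icc 1 n).erase m, c j ≤
      ∑ j1 ∈ Finset.Icc 1 n, ∑ j2 ∈ Finset.Ioc j1 n, min (c j1) (c j2) := by
    rw [← Finset.sum_sigma (Finset.Icc 1 n) (fun j1 => Finset.Ioc j1 n)
      (fun x => min (c x.1) (c x.2))]
    calc ∑ j ∈ (Finset.Icc 1 n).erase m, c j
        = ∑ x ∈ ((Finset.Icc 1 n).erase m).image e, min (c x.1) (c x.2) := by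
          rw [Finset.sum_image (fun i hi j hj => hinj hi hj)]
          refine Finset.sum_congr rfl fun j hj => ?_
          have hjle : c j ≤ c m := hmax j (Finset.mem_of_mem_erase hj)
          by_cases h : j < m <;>
            simp [he, h, min_eq_left hjle, min_eq_right hjle]
      _ ≤ ∑ x ∈ (Finset.Icc 1 n).sigma (fun j1 => Finset.Ioc j1 n), min (c x.1) (c x.2) := by
          apply Finset.sum_le_sum_of_subset_of_nonneg
          · intro x hx
            obtain ⟨j, hj, rfl⟩ := Finset.mem_image.1 hx
            have hjm : j ≠ m := Finset.ne_of_mem_erase hj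
            have hj' := Finset.mem_Icc.1 (Finset.mem_of_mem_erase hj)
            by_cases h : j < m <;>
              simp [he, h, Finset.mem_sigma, Finset.mem_Icc, Finset.mem_Ioc] <;> omega
          · intro x hx _
            have hx' := Finset.mem_sigma.1 hx
            have h1 := Finset.mem_Icc.1 hx'.1
            have h2 := Finset.mem_Ioc.1 hx'.2
            exact le_min (hc0 _ hx'.1) (hc0 _ (Finset.mem_Icc.2 ⟨by omega, h2.2⟩))
  have hsplit : c m + ∑ j ∈ (Finset.Icc 1 n).erase m, c j = ∑ j ∈ Finset.Icc 1 n, c j :=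
    Finset.add_sum_erase _ _ hm
  have := hca m hm
  linarith

/-- **Lemma 1**: for epistemic states `μ_0, …, μ_n` and, for each pair `1 ≤ j1 < j2 ≤ n`,
a 3-outcome measurement with response functions `ξ j1 j2 0, ξ j1 j2 1, ξ j1 j2 2`,
the sum of the classical overlaps of `μ_0` with each `μ_j` is bounded by
`1` plus the sum over pairs of the probabilities of outcome `m_i` on `μ_{j_i}` (with `j_0 = 0`). -/
theorem lemma1 {Λ : Type*} [MeasurableSpace Λ] (ν : Measure Λ) (n : ℕ) (hn : 2 ≤ n)
    (μ : ℕ → Λ → ℝ)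
    (hμ_meas : ∀ j, j ≤ n → Measurable (μ j))
    (hμ_nonneg : ∀ j, j ≤ n → ∀ l, 0 ≤ μ j l)
    (hμ_norm : ∀ j, j ≤ n → ∫ l, μ j l ∂ν = 1)
    (ξ : ℕ → ℕ → Fin 3 → Λ → ℝ)
    (hξ_meas : ∀ j1 j2, 1 ≤ j1 → j1 < j2 → j2 ≤ n → ∀ i, Measurable (ξ j1 j2 i))
    (hξ_nonneg : ∀ j1 j2, 1 ≤ j1 → j1 < j2 → j2 ≤ n → ∀ i l, 0 ≤ ξ j1 j2 i l)
    (hξ_sum : ∀ j1 j2, 1 ≤ j1 → j1 < j2 → j2 ≤ n →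
      ∀ l, ξ j1 j2 0 l + ξ j1 j2 1 l + ξ j1 j2 2 l = 1) :
    ∑ j ∈ Finset.Icc 1 n, ∫ l, min (μ 0 l) (μ j l) ∂ν ≤
      1 + ∑ j1 ∈ Finset.Icc 1 n, ∑ j2 ∈ Finset.Ioc j1 n,
        ((∫ l, ξ j1 j2 0 l * μ 0 l ∂ν) + (∫ l, ξ j1 j2 1 l * μ j1 l ∂ν) +
          (∫ l, ξ j1 j2 2 l * μ j2 l ∂ν)) := by
  have h0n : (0:ℕ) ≤ n := by omega
  -- integrability of the μ's
  have hμ_int : ∀ j, j ≤ n → Integrable (μ j) ν := by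
    intro j hj
    by_contra h
    have := hμ_norm j hj
    rw [integral_undef h] at this
    norm_num at this
  -- integrability of the minima
  have hmin_int : ∀ j, j ≤ n → Integrable (fun l => min (μ 0 l) (μ j l)) ν := by
    intro j hj
    refine (hμ_int 0 h0n).mono
      (((hμ_meas 0 h0n).min (hμ_meas j hj)).aestronglyMeasurable)
      (ae_of_all _ fun l => ?_)
    simp only [Real.norm_eq_abs]
    rw [abs_of_nonneg (le_min (hμ_nonneg 0 h0n l) (hμ_nonneg j hj l)),
      abs_of_nonneg (hμ_nonneg 0 h0n l)]
    exact min_le_left _ _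
  -- response functions are bounded by 1
  have hξ_le_one : ∀ j1 j2, 1 ≤ j1 → j1 < j2 → j2 ≤ n → ∀ i l, ξ j1 j2 i l ≤ 1 := by
    intro j1 j2 h1 h2 h3 i l
    have hs := hξ_sum j1 j2 h1 h2 h3 l
    have h0 := hξ_nonneg j1 j2 h1 h2 h3 0 l
    have ha := hξ_nonneg j1 j2 h1 h2 h3 1 l
    have hb := hξ_nonneg j1 j2 h1 h2 h3 2 l
    fin_cases i <;> simp only [Fin.isValue] <;> first | linarith | (simp; linarith)
  -- integrability of ξ * μ
  have hξμ_int : ∀ j1 j2, 1 ≤ j1 → j1 < j2 → j2 ≤ n → ∀ i, ∀ k, k ≤ n →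
      Integrable (fun l => ξ j1 j2 i l * μ k l) ν := by
    intro j1 j2 h1 h2 h3 i k hk
    refine (hμ_int k hk).mono
      (((hξ_meas j1 j2 h1 h2 h3 i).mul (hμ_meas k hk)).aestronglyMeasurable)
      (ae_of_all _ fun l => ?_)
    simp only [Real.norm_eq_abs]
    rw [abs_of_nonneg (mul_nonneg (hξ_nonneg j1 j2 h1 h2 h3 i l) (hμ_nonneg k hk l)),
      abs_of_nonneg (hμ_nonneg k hk l)]
    nlinarith [hξ_le_one j1 j2 h1 h2 h3 i l, hμ_nonneg k hk l,
      hξ_nonneg j1 j2 h1 h2 h3 i l]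
  -- range facts for pairs
  have hpair : ∀ j1 ∈ Finset.Icc 1 n, ∀ j2 ∈ Finset.Ioc j1 n,
      1 ≤ j1 ∧ j1 < j2 ∧ j2 ≤ n := by
    intro j1 hj1 j2 hj2
    have := Finset.mem_Icc.1 hj1
    have := Finset.mem_Ioc.1 hj2
    omega
  set G : Λ → ℝ := fun l => μ 0 l + ∑ j1 ∈ Finset.Icc 1 n, ∑ j2 ∈ Finset.Ioc j1 n,
    (ξ j1 j2 0 l * μ 0 l + ξ j1 j2 1 l * μ j1 l + ξ j1 j2 2 l * μ j2 l) with hG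
  have hG_inner_int : ∀ j1 ∈ Finset.Icc 1 n, ∀ j2 ∈ Finset.Ioc j1 n,
      Integrable (fun l => ξ j1 j2 0 l * μ 0 l + ξ j1 j2 1 l * μ j1 l
        + ξ j1 j2 2 l * μ j2 l) ν := by
    intro j1 hj1 j2 hj2
    obtain ⟨h1, h2, h3⟩ := hpair j1 hj1 j2 hj2
    exact ((hξμ_int j1 j2 h1 h2 h3 0 0 h0n).add
      (hξμ_int j1 j2 h1 h2 h3 1 j1 (by omega))).add
      (hξμ_int j1 j2 h1 h2 h3 2 j2 h3)
  have hG_int : Integrable G ν := by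
    refine (hμ_int 0 h0n).add (integrable_finset_sum _ fun j1 hj1 => ?_)
    exact integrable_finset_sum _ fun j2 hj2 => hG_inner_int j1 hj1 j2 hj2
  have hF_int : Integrable (fun l => ∑ j ∈ Finset.Icc 1 n, min (μ 0 l) (μ j l)) ν :=
    integrable_finset_sum _ fun j hj => hmin_int j (Finset.mem_Icc.1 hj).2
  -- pointwise key inequality
  have key : ∀ l, ∑ j ∈ Finset.Icc 1 n, min (μ 0 l) (μ j l) ≤ G l := by
    intro l
    have h1 := lemma1_aux_comb n hn (μ 0 l) (fun j => min (μ 0 l) (μ j l))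
      (fun j hj => le_min (hμ_nonneg 0 h0n l) (hμ_nonneg j (Finset.mem_Icc.1 hj).2 l))
      (fun j hj => min_le_left _ _)
    refine h1.trans ?_
    simp only [hG]
    refine add_le_add le_rfl (Finset.sum_le_sum fun j1 hj1 => Finset.sum_le_sum fun j2 hj2 => ?_)
    obtain ⟨ha, hb, hc⟩ := hpair j1 hj1 j2 hj2
    have hs := hξ_sum j1 j2 ha hb hc l
    have h0 := hξ_nonneg j1 j2 ha hb hc 0 l
    have hA := hξ_nonneg j1 j2 ha hb hc 1 l
    have hB := hξ_nonneg j1 j2 ha hb hc 2 l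
    have hm0 : min (min (μ 0 l) (μ j1 l)) (min (μ 0 l) (μ j2 l)) ≤ μ 0 l :=
      (min_le_left _ _).trans (min_le_left _ _)
    have hm1 : min (min (μ 0 l) (μ j1 l)) (min (μ 0 l) (μ j2 l)) ≤ μ j1 l :=
      (min_le_left _ _).trans (min_le_right _ _)
    have hm2 : min (min (μ 0 l) (μ j1 l)) (min (μ 0 l) (μ j2 l)) ≤ μ j2 l :=
      (min_le_right _ _).trans (min_le_right _ _)
    set m := min (min (μ 0 l) (μ j1 l)) (min (μ 0 l) (μ j2 l)) with hmdef
    have e1 : ξ j1 j2 0 l * m ≤ ξ j1 j2 0 l * μ 0 l := mul_le_mul_of_nonneg_left hm0 h0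
    have e2 : ξ j1 j2 1 l * m ≤ ξ j1 j2 1 l * μ j1 l := mul_le_mul_of_nonneg_left hm1 hA
    have e3 : ξ j1 j2 2 l * m ≤ ξ j1 j2 2 l * μ j2 l := mul_le_mul_of_nonneg_left hm2 hB
    have e4 : ξ j1 j2 0 l * m + ξ j1 j2 1 l * m + ξ j1 j2 2 l * m = m := by
      calc ξ j1 j2 0 l * m + ξ j1 j2 1 l * m + ξ j1 j2 2 l * m
          = (ξ j1 j2 0 l + ξ j1 j2 1 l + ξ j1 j2 2 l) * m := by ring
        _ = 1 * m := by rw [hs]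
        _ = m := one_mul m
    linarith
  -- integrate
  calc ∑ j ∈ Finset.Icc 1 n, ∫ l, min (μ 0 l) (μ j l) ∂ν
      = ∫ l, ∑ j ∈ Finset.Icc 1 n, min (μ 0 l) (μ j l) ∂ν :=
        (integral_finset_sum _ fun j hj => hmin_int j (Finset.mem_Icc.1 hj).2).symm
    _ ≤ ∫ l, G l ∂ν := integral_mono hF_int hG_int key
    _ = 1 + ∑ j1 ∈ Finset.Icc 1 n, ∑ j2 ∈ Finset.Ioc j1 n,
        ((∫ l, ξ j1 j2 0 l * μ 0 l ∂ν) + (∫ l, ξ j1 j2 1 l * μ j1 l ∂ν) +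
          (∫ l, ξ j1 j2 2 l * μ j2 l ∂ν)) := by
        simp only [hG]
        rw [integral_add (hμ_int 0 h0n) (integrable_finset_sum _ fun j1 hj1 =>
          integrable_finset_sum _ fun j2 hj2 => hG_inner_int j1 hj1 j2 hj2)]
        rw [hμ_norm 0 h0n]
        congr 1
        rw [integral_finset_sum _ fun j1 hj1 =>
          integrable_finset_sum _ fun j2 hj2 => hG_inner_int j1 hj1 j2 hj2]
        refine Finset.sum_congr rfl fun j1 hj1 => ?_
        rw [integral_finset_sum _ fun j2 hj2 => hG_inner_int j1 hj1 j2 hj2]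
        refine Finset.sum_congr rfl fun j2 hj2 => ?_
        obtain ⟨h1, h2, h3⟩ := hpair j1 hj1 j2 hj2
        have hA := hξμ_int j1 j2 h1 h2 h3 0 0 h0n
        have hB := hξμ_int j1 j2 h1 h2 h3 1 j1 (by omega)
        have hC := hξμ_int j1 j2 h1 h2 h3 2 j2 h3
        have hAB : Integrable (fun l => ξ j1 j2 0 l * μ 0 l + ξ j1 j2 1 l * μ j1 l) ν :=
          hA.add hB
        rw [integral_add hAB hC, integral_add hA hB]
end

section
/- Let n ≥ 2 and let ψ_0, ψ_1, …, ψ_n be unit vectors in ℂ^d such that every triple (ψ_0, ψ_{j1}, ψ_{j2}) with 1 ≤ j1 < j2 ≤ n is PP-incompatible, and such that all quantum overlaps with ψ_0 are equal and nonzero: |⟨ψ_0, ψ_j⟩| = |⟨ψ_0, ψ_1⟩| ≠ 0 for all 1 ≤ j ≤ n. Then every ontological model for projective measurements on ℂ^d that reproduces quantum measurement statistics satisfies (1/n) ∑_{j=1}^{n} κ(ψ_0, ψ_j) ≤ 1 / (n · ω_Q(ψ_0, ψ_1)). -/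
noncomputable section

/-- An ontological model for projective measurements on `ℂ^d`: a σ-finite measure space
of ontic states, an epistemic state (normalized probability density) for each unit vector,
and response functions for each orthonormal (projection) basis. -/
structure OntModel (d : ℕ) where
  /-- the ontic state space -/
  Lam : Type
  [ms : MeasurableSpace Lam]
  /-- the measure on the ontic state space -/
  ν : MeasureTheory.Measure Lam
  sf : MeasureTheory.SigmaFinite ν
  /-- the epistemic states -/
  μ : EuclideanSpace ℂ (Fin d) → Lam → ℝ
  μ_meas : ∀ ψ, Measurable (μ ψ)
  μ_nonneg : ∀ ψ l, 0 ≤ μ ψ l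
  μ_norm : ∀ ψ : EuclideanSpace ℂ (Fin d), ‖ψ‖ = 1 → ∫ l, μ ψ l ∂ν = 1
  /-- the response functions -/
  ξ : (Fin d → EuclideanSpace ℂ (Fin d)) → Fin d → Lam → ℝ
  ξ_meas : ∀ M i, Measurable (ξ M i)
  ξ_nonneg : ∀ M i l, 0 ≤ ξ M i l
  ξ_sum : ∀ M, Orthonormal ℂ M → ∀ l, ∑ i, ξ M i l = 1

/-- The model reproduces quantum measurement statistics: for every unit vector `ψ` and
every orthonormal basis `M`, the probability of outcome `i` is `|⟨m_i, ψ⟩|²`. -/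
def Reproduces {d : ℕ} (m : OntModel d) : Prop :=
  ∀ ψ : EuclideanSpace ℂ (Fin d), ‖ψ‖ = 1 →
    ∀ M : Fin d → EuclideanSpace ℂ (Fin d), Orthonormal ℂ M →
      ∀ i : Fin d, ∫ l, m.ξ M i l * m.μ ψ l ∂m.ν = ‖(inner ℂ (M i) ψ : ℂ)‖ ^ 2

/-- The classical overlap `ω_C(ψ, φ) = ∫ min(μ_ψ, μ_φ) dν`. -/
def omegaC {d : ℕ} (m : OntModel d) (ψ φ : EuclideanSpace ℂ (Fin d)) : ℝ :=
  ∫ l, min (m.μ ψ l) (m.μ φ l) ∂m.ν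

/-- The quantum overlap `ω_Q(ψ, φ) = 1 − √(1 − |⟨ψ, φ⟩|²)`. -/
def omegaQ {d : ℕ} (ψ φ : EuclideanSpace ℂ (Fin d)) : ℝ :=
  1 - Real.sqrt (1 - ‖(inner ℂ ψ φ : ℂ)‖ ^ 2)

/-- The ratio of classical-to-quantum overlaps `κ(ψ, φ) = ω_C(ψ, φ)/ω_Q(ψ, φ)`. -/
def kappa {d : ℕ} (m : OntModel d) (ψ φ : EuclideanSpace ℂ (Fin d)) : ℝ :=
  omegaC m ψ φ / omegaQ ψ φ

/-- An orthogonal projection: idempotent and symmetric. -/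
def IsOrthogonalProjection {d : ℕ}
    (P : EuclideanSpace ℂ (Fin d) →ₗ[ℂ] EuclideanSpace ℂ (Fin d)) : Prop :=
  P ∘ₗ P = P ∧ LinearMap.IsSymmetric P

/-- `(ψ0, ψ1, ψ2)` are PP-incompatible: there are orthogonal projections summing to the
identity with `P_i ψ_i = 0` for each `i`. -/
def PPIncompatible {d : ℕ} (ψ0 ψ1 ψ2 : EuclideanSpace ℂ (Fin d)) : Prop :=
  ∃ P0 P1 P2 : EuclideanSpace ℂ (Fin d) →ₗ[ℂ] EuclideanSpace ℂ (Fin d),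
    IsOrthogonalProjection P0 ∧ IsOrthogonalProjection P1 ∧ IsOrthogonalProjection P2 ∧
    P0 + P1 + P2 = LinearMap.id ∧ P0 ψ0 = 0 ∧ P1 ψ1 = 0 ∧ P2 ψ2 = 0


open Module MeasureTheory in
section

lemma prodzero {R : Type*} [Ring R] [Module ℂ R] [SMulCommClass ℂ R R] [IsScalarTower ℂ R R]
    [NoZeroSMulDivisors ℂ R]
    (a b c : R) (ha : a*a=a) (hb : b*b=b) (hc : c*c=c) (hs : a+b+c=1) : b*c = 0 := by
  have e1 : (b+c)*(b+c) = b + c := by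
    have h2 : b + c = 1 - a := by rw [← hs]; abel
    rw [h2, sub_mul, one_mul, mul_sub, mul_one, ha]; abel
  have hbc : b*c + c*b = 0 := by
    calc b*c + c*b = ((b*b + c*b) + (b*c + c*c)) - (b+c) := by rw [hb, hc]; abel
    _ = (b+c)*(b+c) - (b+c) := by rw [mul_add, add_mul, add_mul]
    _ = 0 := by rw [e1, sub_self]
  have hcb : c*b = -(b*c) := eq_neg_of_add_eq_zero_right hbc
  have hbc' : b*c = -(c*b) := eq_neg_of_add_eq_zero_left hbc
  have e2 : b*c*b = -(b*c) := by
    calc b*c*b = b*(c*b) := by rw [mul_assoc]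
    _ = -(b*(b*c)) := by rw [hcb, mul_neg]
    _ = -(b*c) := by rw [← mul_assoc, hb]
  have e3 : b*c*b = b*c := by
    calc b*c*b = -(c*b*b) := by rw [hbc', neg_mul]
    _ = -(c*b) := by rw [mul_assoc, hb]
    _ = b*c := hbc'.symm
  have e4 : (2:ℂ) • (b*c) = 0 := by
    rw [two_smul]
    nth_rewrite 1 [← e3]
    rw [e2, neg_add_cancel]
  rcases smul_eq_zero.mp e4 with h | h
  · norm_num at h
  · exact h

lemma exists_antidist_basis' {E : Type*} [NormedAddCommGroup E] [InnerProductSpace ℂ E]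
    [FiniteDimensional ℂ E] {d : ℕ} (hn : finrank ℂ E = d)
    (φ : Fin 3 → E) (P : Fin 3 → E →ₗ[ℂ] E)
    (hidem : ∀ k, P k * P k = P k) (hsym : ∀ k, LinearMap.IsSymmetric (P k))
    (hsum : P 0 + P 1 + P 2 = 1) (hz : ∀ k, P k (φ k) = 0) :
    ∃ (M : Fin d → E) (f : Fin d → Fin 3),
      Orthonormal ℂ M ∧ ∀ i, (inner ℂ (M i) (φ (f i)) : ℂ) = 0 := by
  classical
  have hQ01 : P 0 * P 1 = 0 :=
    prodzero (P 2) (P 0) (P 1) (hidem 2) (hidem 0) (hidem 1) (by rw [← hsum]; abel)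
  have hQ02 : P 0 * P 2 = 0 :=
    prodzero (P 1) (P 0) (P 2) (hidem 1) (hidem 0) (hidem 2) (by rw [← hsum]; abel)
  have hQ10 : P 1 * P 0 = 0 :=
    prodzero (P 2) (P 1) (P 0) (hidem 2) (hidem 1) (hidem 0) (by rw [← hsum]; abel)
  have hQ12 : P 1 * P 2 = 0 :=
    prodzero (P 0) (P 1) (P 2) (hidem 0) (hidem 1) (hidem 2) (by rw [← hsum])
  have hQ20 : P 2 * P 0 = 0 :=
    prodzero (P 1) (P 2) (P 0) (hidem 1) (hidem 2) (hidem 0) (by rw [← hsum]; abel)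
  have hQ21 : P 2 * P 1 = 0 :=
    prodzero (P 0) (P 2) (P 1) (hidem 0) (hidem 2) (hidem 1) (by rw [← hsum]; abel)
  have hprod : ∀ j k : Fin 3, j ≠ k → P j * P k = 0 := by
    intro j k hjk
    fin_cases j <;> fin_cases k
    · exact absurd rfl hjk
    · exact hQ01
    · exact hQ02
    · exact hQ10
    · exact absurd rfl hjk
    · exact hQ12
    · exact hQ20
    · exact hQ21
    · exact absurd rfl hjk
  set V : Fin 3 → Submodule ℂ E := fun k => LinearMap.range (P k) with hVdef
  have hfam : OrthogonalFamily ℂ (fun k => V k) fun k => (V k).subtypeₗᵢ := by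
    intro j k hjk v w
    obtain ⟨x, hx⟩ := v.2
    obtain ⟨y, hy⟩ := w.2
    show (inner ℂ (v : E) (w : E) : ℂ) = 0
    rw [← hx, ← hy, hsym j x (P k y)]
    have hz' : P j (P k y) = 0 := by
      have h1 : P j (P k y) = (P j * P k) y := rfl
      rw [h1, hprod j k hjk]
      rfl
    rw [hz', inner_zero_right]
  have hint : DirectSum.IsInternal V := by
    apply DirectSum.isInternal_submodule_of_iSupIndep_of_iSup_eq_top hfam.independent
    rw [Submodule.eq_top_iff']
    intro x
    have hx : x = P 0 x + P 1 x + P 2 x := by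
      have h1 := congrArg (fun T => T x) hsum
      simpa using h1.symm
    rw [hx]
    refine Submodule.add_mem _ (Submodule.add_mem _ ?_ ?_) ?_ <;>
      exact Submodule.mem_iSup_of_mem _ (LinearMap.mem_range_self _ _)
  refine ⟨fun i => hint.subordinateOrthonormalBasis hn hfam i,
    fun i => hint.subordinateOrthonormalBasisIndex hn i hfam,
    (hint.subordinateOrthonormalBasis hn hfam).orthonormal, ?_⟩
  intro i
  set k := hint.subordinateOrthonormalBasisIndex hn i hfam with hk
  have hmem : hint.subordinateOrthonormalBasis hn hfam i ∈ V k :=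
    hint.subordinateOrthonormalBasis_subordinate hn i hfam
  obtain ⟨x, hx⟩ := hmem
  show (inner ℂ (hint.subordinateOrthonormalBasis hn hfam i) (φ k) : ℂ) = 0
  rw [← hx, hsym k, hz k, inner_zero_right]


lemma exists_antidist_basis {d : ℕ} {ψ0 ψ1 ψ2 : EuclideanSpace ℂ (Fin d)}
    (h : PPIncompatible ψ0 ψ1 ψ2) :
    ∃ (M : Fin d → EuclideanSpace ℂ (Fin d)) (f : Fin d → Fin 3),
      Orthonormal ℂ M ∧ ∀ i, (inner ℂ (M i) (![ψ0, ψ1, ψ2] (f i)) : ℂ) = 0 := by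
  obtain ⟨P0, P1, P2, hP0, hP1, hP2, hsum, hz0, hz1, hz2⟩ := h
  refine exists_antidist_basis' finrank_euclideanSpace_fin ![ψ0, ψ1, ψ2] ![P0, P1, P2]
    ?_ ?_ ?_ ?_
  · intro k; fin_cases k
    · exact hP0.1
    · exact hP1.1
    · exact hP2.1
  · intro k; fin_cases k
    · exact hP0.2
    · exact hP1.2
    · exact hP2.2
  · exact hsum
  · intro k; fin_cases k
    · exact hz0
    · exact hz1
    · exact hz2


lemma mu_integrable {d : ℕ} (m : OntModel d) {ψ : EuclideanSpace ℂ (Fin d)} (h : ‖ψ‖ = 1) :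
    Integrable (m.μ ψ) m.ν := by
  by_contra hc
  have h1 := m.μ_norm ψ h
  rw [integral_undef hc] at h1
  norm_num at h1

lemma xi_le_one {d : ℕ} (m : OntModel d) {M : Fin d → EuclideanSpace ℂ (Fin d)}
    (hM : Orthonormal ℂ M) (i : Fin d) (l : m.Lam) : m.ξ M i l ≤ 1 := by
  calc m.ξ M i l ≤ ∑ i', m.ξ M i' l :=
        Finset.single_le_sum (fun j _ => m.ξ_nonneg M j l) (Finset.mem_univ i)
  _ = 1 := m.ξ_sum M hM l

lemma step_A {d : ℕ} (m : OntModel d) (hm : Reproduces m)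
    {ψ0 ψ1 ψ2 : EuclideanSpace ℂ (Fin d)}
    (h0 : ‖ψ0‖ = 1) (h1 : ‖ψ1‖ = 1) (h2 : ‖ψ2‖ = 1)
    (hpp : PPIncompatible ψ0 ψ1 ψ2) :
    ∀ᵐ l ∂m.ν, ¬(0 < m.μ ψ0 l ∧ 0 < m.μ ψ1 l ∧ 0 < m.μ ψ2 l) := by
  obtain ⟨M, f, hM, hortho⟩ := exists_antidist_basis hpp
  have hφunit : ∀ k : Fin 3, ‖![ψ0, ψ1, ψ2] k‖ = 1 := by
    intro k; fin_cases k <;> assumption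
  have key : ∀ i : Fin d, ∀ᵐ l ∂m.ν, m.ξ M i l * m.μ (![ψ0, ψ1, ψ2] (f i)) l = 0 := by
    intro i
    have hrep := hm (![ψ0, ψ1, ψ2] (f i)) (hφunit (f i)) M hM i
    rw [hortho i, norm_zero] at hrep
    have hint : Integrable (fun l => m.ξ M i l * m.μ (![ψ0, ψ1, ψ2] (f i)) l) m.ν := by
      refine Integrable.mono' (mu_integrable m (hφunit (f i)))
        (((m.ξ_meas M i).mul (m.μ_meas _)).aestronglyMeasurable) ?_
      filter_upwards with l
      rw [Real.norm_eq_abs, abs_of_nonneg (mul_nonneg (m.ξ_nonneg M i l) (m.μ_nonneg _ l))]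
      calc m.ξ M i l * m.μ (![ψ0, ψ1, ψ2] (f i)) l
          ≤ 1 * m.μ (![ψ0, ψ1, ψ2] (f i)) l :=
            mul_le_mul_of_nonneg_right (xi_le_one m hM i l) (m.μ_nonneg _ l)
      _ = m.μ (![ψ0, ψ1, ψ2] (f i)) l := one_mul _
    have hz := (integral_eq_zero_iff_of_nonneg
      (fun l => mul_nonneg (m.ξ_nonneg M i l) (m.μ_nonneg _ l)) hint).mp
      (by rw [hrep]; norm_num)
    filter_upwards [hz] with l hl
    exact hl
  have key2 : ∀ᵐ l ∂m.ν, ∀ i : Fin d, m.ξ M i l * m.μ (![ψ0, ψ1, ψ2] (f i)) l = 0 :=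
    ae_all_iff.2 key
  filter_upwards [key2] with l hl
  rintro ⟨hp0, hp1, hp2⟩
  have hpos : ∀ k : Fin 3, 0 < m.μ (![ψ0, ψ1, ψ2] k) l := by
    intro k; fin_cases k <;> assumption
  have hxi : ∀ i : Fin d, m.ξ M i l = 0 := fun i =>
    (mul_eq_zero.mp (hl i)).resolve_right (ne_of_gt (hpos (f i)))
  have hs := m.ξ_sum M hM l
  rw [Finset.sum_eq_zero (fun i _ => hxi i)] at hs
  norm_num at hs

end

open Module MeasureTheory

/-- **Eq. (8)**: if every triple `(ψ_0, ψ_{j1}, ψ_{j2})` is PP-incompatible and all quantum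
overlaps with `ψ_0` are equal and nonzero, then in every ontological model reproducing quantum
measurement statistics, the average ratio of classical-to-quantum overlaps is at most
`1/(n·ω_Q(ψ_0, ψ_1))`. -/
theorem eq8 (d n : ℕ) (hn : 2 ≤ n)
    (ψ : ℕ → EuclideanSpace ℂ (Fin d))
    (hunit : ∀ j, j ≤ n → ‖ψ j‖ = 1)
    (hPP : ∀ j1 j2, 1 ≤ j1 → j1 < j2 → j2 ≤ n → PPIncompatible (ψ 0) (ψ j1) (ψ j2))
    (heq : ∀ j, 1 ≤ j → j ≤ n →
      ‖(inner ℂ (ψ 0) (ψ j) : ℂ)‖ = ‖(inner ℂ (ψ 0) (ψ 1) : ℂ)‖)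
    (hne : (inner ℂ (ψ 0) (ψ 1) : ℂ) ≠ 0)
    (m : OntModel d) (hm : Reproduces m) :
    (1 / (n : ℝ)) * ∑ j ∈ Finset.Icc 1 n, kappa m (ψ 0) (ψ j) ≤
      1 / (n * omegaQ (ψ 0) (ψ 1)) := by
  classical
  have hu0 : ‖ψ 0‖ = 1 := hunit 0 (by omega)
  have hint0 : MeasureTheory.Integrable (m.μ (ψ 0)) m.ν := mu_integrable m hu0
  have hintmin : ∀ j ∈ Finset.Icc 1 n,
      MeasureTheory.Integrable (fun l => min (m.μ (ψ 0) l) (m.μ (ψ j) l)) m.ν := by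
    intro j hj
    refine MeasureTheory.Integrable.mono' hint0
      (((m.μ_meas (ψ 0)).min (m.μ_meas (ψ j))).aestronglyMeasurable) ?_
    filter_upwards with l
    rw [Real.norm_eq_abs,
      abs_of_nonneg (le_min (m.μ_nonneg _ l) (m.μ_nonneg _ l))]
    exact min_le_left _ _
  have haepair : ∀ᵐ l ∂m.ν, ∀ j1 j2 : ℕ, 1 ≤ j1 → j1 < j2 → j2 ≤ n →
      ¬(0 < m.μ (ψ 0) l ∧ 0 < m.μ (ψ j1) l ∧ 0 < m.μ (ψ j2) l) := by
    rw [MeasureTheory.ae_all_iff]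
    intro j1
    rw [MeasureTheory.ae_all_iff]
    intro j2
    by_cases h : 1 ≤ j1 ∧ j1 < j2 ∧ j2 ≤ n
    · obtain ⟨ha, hb, hc⟩ := h
      have := step_A m hm hu0 (hunit j1 (by omega)) (hunit j2 hc) (hPP j1 j2 ha hb hc)
      filter_upwards [this] with l hl _ _ _
      exact hl
    · filter_upwards with l h1 h2 h3
      exact absurd ⟨h1, h2, h3⟩ h
  have haesum : ∀ᵐ l ∂m.ν,
      (∑ j ∈ Finset.Icc 1 n, min (m.μ (ψ 0) l) (m.μ (ψ j) l)) ≤ m.μ (ψ 0) l := by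
    filter_upwards [haepair] with l H
    set t := (Finset.Icc 1 n).filter (fun j => 0 < m.μ (ψ j) l) with hts
    have hsum_eq : ∑ j ∈ Finset.Icc 1 n, min (m.μ (ψ 0) l) (m.μ (ψ j) l)
        = ∑ j ∈ t, min (m.μ (ψ 0) l) (m.μ (ψ j) l) := by
      refine (Finset.sum_filter_of_ne ?_).symm
      intro j hj hne'
      by_contra hc
      have hj0 : m.μ (ψ j) l = 0 := le_antisymm (not_lt.1 hc) (m.μ_nonneg _ l)
      rw [hj0, min_eq_right (m.μ_nonneg _ l)] at hne'
      exact hne' rfl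
    rw [hsum_eq]
    by_cases h0 : 0 < m.μ (ψ 0) l
    · have huniq : ∀ a ∈ t, ∀ b ∈ t, a = b := by
        intro a ha b hb
        by_contra hab
        rw [hts, Finset.mem_filter, Finset.mem_Icc] at ha hb
        rcases lt_or_gt_of_ne hab with hlt | hgt
        · exact H a b ha.1.1 hlt hb.1.2 ⟨h0, ha.2, hb.2⟩
        · exact H b a hb.1.1 hgt ha.1.2 ⟨h0, hb.2, ha.2⟩
      rcases t.eq_empty_or_nonempty with he | ⟨a, ha⟩
      · rw [he, Finset.sum_empty]
        exact le_of_lt h0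
      · have hts' : t = {a} :=
          Finset.eq_singleton_iff_unique_mem.2 ⟨ha, fun b hb => huniq b hb a ha⟩
        rw [hts', Finset.sum_singleton]
        exact min_le_left _ _
    · have h00 : m.μ (ψ 0) l = 0 := le_antisymm (not_lt.1 h0) (m.μ_nonneg _ l)
      rw [Finset.sum_eq_zero fun j _ => by rw [h00, min_eq_left (m.μ_nonneg _ l)], h00]
  have hsumle : ∑ j ∈ Finset.Icc 1 n, omegaC m (ψ 0) (ψ j) ≤ 1 := by
    rw [← m.μ_norm (ψ 0) hu0]
    have h1 : ∑ j ∈ Finset.Icc 1 n, omegaC m (ψ 0) (ψ j)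
        = ∫ l, ∑ j ∈ Finset.Icc 1 n, min (m.μ (ψ 0) l) (m.μ (ψ j) l) ∂m.ν :=
      (MeasureTheory.integral_finset_sum _ hintmin).symm
    rw [h1]
    exact MeasureTheory.integral_mono_ae
      (MeasureTheory.integrable_finset_sum _ hintmin) hint0 haesum
  -- omegaQ facts
  have htle : ‖(inner ℂ (ψ 0) (ψ 1) : ℂ)‖ ≤ 1 := by
    calc ‖(inner ℂ (ψ 0) (ψ 1) : ℂ)‖ ≤ ‖ψ 0‖ * ‖ψ 1‖ := norm_inner_le_norm _ _
    _ = 1 := by rw [hu0, hunit 1 (by omega), mul_one]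
  have htpos : 0 < ‖(inner ℂ (ψ 0) (ψ 1) : ℂ)‖ := norm_pos_iff.2 hne
  have hQpos : 0 < omegaQ (ψ 0) (ψ 1) := by
    unfold omegaQ
    have hlt : Real.sqrt (1 - ‖(inner ℂ (ψ 0) (ψ 1) : ℂ)‖ ^ 2) < 1 := by
      have h2 : 1 - ‖(inner ℂ (ψ 0) (ψ 1) : ℂ)‖ ^ 2 < 1 := by nlinarith
      calc Real.sqrt (1 - ‖(inner ℂ (ψ 0) (ψ 1) : ℂ)‖ ^ 2) < Real.sqrt 1 :=
            Real.sqrt_lt_sqrt (by nlinarith) h2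
      _ = 1 := Real.sqrt_one
    linarith
  have hQeq : ∀ j, 1 ≤ j → j ≤ n → omegaQ (ψ 0) (ψ j) = omegaQ (ψ 0) (ψ 1) := by
    intro j h1j hjn
    unfold omegaQ
    rw [heq j h1j hjn]
  have hκ : ∑ j ∈ Finset.Icc 1 n, kappa m (ψ 0) (ψ j)
      = (∑ j ∈ Finset.Icc 1 n, omegaC m (ψ 0) (ψ j)) / omegaQ (ψ 0) (ψ 1) := by
    rw [Finset.sum_div]
    refine Finset.sum_congr rfl fun j hj => ?_
    rw [Finset.mem_Icc] at hj
    unfold kappa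
    rw [hQeq j hj.1 hj.2]
  rw [hκ]
  have hn0 : (0:ℝ) < n := by positivity
  rw [show (1:ℝ) / (n * omegaQ (ψ 0) (ψ 1))
      = (1 / n) * (1 / omegaQ (ψ 0) (ψ 1)) by rw [div_mul_div_comm, one_mul]]
  gcongr
end
end

section
/- Let (Λ, ν) be a measure space, let n ≥ 2, and let μ_0, μ_1, …, μ_n : Λ → ℝ be measurable functions with μ_j ≥ 0 pointwise and ∫ μ_j dν = 1 for every j. For each pair 1 ≤ j1 < j2 ≤ n let ξ^{(j1,j2)}_0, ξ^{(j1,j2)}_1, ξ^{(j1,j2)}_2 : Λ → ℝ be measurable with ξ^{(j1,j2)}_i ≥ 0 pointwise and ξ^{(j1,j2)}_0 + ξ^{(j1,j2)}_1 + ξ^{(j1,j2)}_2 = 1 pointwise, and set p^{(j1,j2)}_0 = ∫ ξ^{(j1,j2)}_0 μ_0 dν, p^{(j1,j2)}_1 = ∫ ξ^{(j1,j2)}_1 μ_{j1} dν, p^{(j1,j2)}_2 = ∫ ξ^{(j1,j2)}_2 μ_{j2} dν. Suppose ψ_0, ψ_1, …, ψ_n are unit vectors in ℂ^d with ⟨ψ_0,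 ψ_j⟩ ≠ 0 for all j and κ_0 is a real number such that ∫ min(μ_0, μ_j) dν ≥ κ_0 · ω_Q(ψ_0, ψ_j) for all 1 ≤ j ≤ n, where ω_Q(ψ_0, ψ_j) = 1 − √(1 − |⟨ψ_0, ψ_j⟩|²). Then κ_0 ≤ (1 + ∑_{1 ≤ j1 < j2 ≤ n} (p^{(j1,j2)}_0 + p^{(j1,j2)}_1 + p^{(j1,j2)}_2)) / (∑_{j=1}^{n} ω_Q(ψ_0, ψ_j)). -/
noncomputable section

/-- Pointwise combinatorial lemma. -/
lemma sum_min_aux (n : ℕ) (hn : 1 ≤ n) (a : ℝ) (m : ℕ → ℝ)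
    (hm0 : ∀ j ∈ Finset.Icc 1 n, 0 ≤ m j)
    (hma : ∀ j ∈ Finset.Icc 1 n, m j ≤ a) :
    ∑ j ∈ Finset.Icc 1 n, m j ≤
      a + ∑ j1 ∈ Finset.Icc 1 n, ∑ j2 ∈ Finset.Ioc j1 n, min (m j1) (m j2) := by
  obtain ⟨k, hk, hkmax⟩ := Finset.exists_max_image (Finset.Icc 1 n) m ⟨1, by simp [hn]⟩
  obtain ⟨hk1, hkn⟩ := Finset.mem_Icc.mp hk
  have hmem : ∀ j, 1 ≤ j → j ≤ n → j ∈ Finset.Icc 1 n := fun j h1 h2 => Finset.mem_Icc.mpr ⟨h1, h2⟩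
  -- split LHS
  have hsplit : ∑ j ∈ Finset.Icc 1 n, m j
      = ∑ j ∈ Finset.Ico 1 k, m j + m k + ∑ j ∈ Finset.Ioc k n, m j := by
    have h1 : Finset.Icc 1 n = Finset.Icc 1 k ∪ Finset.Ioc k n := by
      ext x; simp only [Finset.mem_Icc, Finset.mem_union, Finset.mem_Ioc]; omega
    have hdisj : Disjoint (Finset.Icc 1 k) (Finset.Ioc k n) := by
      rw [Finset.disjoint_left]; intro x hx hx'
      simp only [Finset.mem_Icc] at hx; simp only [Finset.mem_Ioc] at hx'; omega
    rw [h1, Finset.sum_union hdisj]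
    have h2 : Finset.Icc 1 k = Finset.Ico 1 (k+1) := by rw [Finset.Ico_add_one_right_eq_Icc]
    rw [h2, Finset.sum_Ico_succ_top hk1]
  rw [hsplit]
  set T := ∑ j1 ∈ Finset.Icc 1 n, ∑ j2 ∈ Finset.Ioc j1 n, min (m j1) (m j2) with hT
  have hf0 : ∀ j1 ∈ Finset.Icc 1 n, 0 ≤ ∑ j2 ∈ Finset.Ioc j1 n, min (m j1) (m j2) := by
    intro j1 hj1
    apply Finset.sum_nonneg
    intro j2 hj2
    simp only [Finset.mem_Ioc] at hj2
    simp only [Finset.mem_Icc] at hj1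
    exact le_min (hm0 j1 (hmem _ hj1.1 hj1.2)) (hm0 j2 (hmem _ (by omega) hj2.2))
  have hTge : ∑ j1 ∈ Finset.Ico 1 k, (∑ j2 ∈ Finset.Ioc j1 n, min (m j1) (m j2))
      + ∑ j2 ∈ Finset.Ioc k n, min (m k) (m j2) ≤ T := by
    have hsub : Finset.Icc 1 k ⊆ Finset.Icc 1 n := Finset.Icc_subset_Icc le_rfl hkn
    calc ∑ j1 ∈ Finset.Ico 1 k, (∑ j2 ∈ Finset.Ioc j1 n, min (m j1) (m j2))
          + ∑ j2 ∈ Finset.Ioc k n, min (m k) (m j2)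
        = ∑ j1 ∈ Finset.Icc 1 k, ∑ j2 ∈ Finset.Ioc j1 n, min (m j1) (m j2) := by
          rw [show Finset.Icc 1 k = Finset.Ico 1 (k+1) by rw [Finset.Ico_add_one_right_eq_Icc],
            Finset.sum_Ico_succ_top hk1]
      _ ≤ T := Finset.sum_le_sum_of_subset_of_nonneg hsub (fun i hi _ => hf0 i hi)
  have h1 : ∑ j ∈ Finset.Ico 1 k, m j ≤
      ∑ j1 ∈ Finset.Ico 1 k, ∑ j2 ∈ Finset.Ioc j1 n, min (m j1) (m j2) := by
    apply Finset.sum_le_sum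
    intro j1 hj1
    simp only [Finset.mem_Ico] at hj1
    have hkIoc : k ∈ Finset.Ioc j1 n := Finset.mem_Ioc.mpr ⟨hj1.2, hkn⟩
    have : m j1 ≤ min (m j1) (m k) :=
      le_min le_rfl (by linarith [hkmax j1 (hmem _ hj1.1 (by omega))])
    calc m j1 ≤ min (m j1) (m k) := this
      _ ≤ ∑ j2 ∈ Finset.Ioc j1 n, min (m j1) (m j2) := by
          apply Finset.single_le_sum (f := fun j2 => min (m j1) (m j2)) _ hkIoc
          intro j2 hj2
          simp only [Finset.mem_Ioc] at hj2
          exact le_min (hm0 j1 (hmem _ hj1.1 (by omega))) (hm0 j2 (hmem _ (by omega) hj2.2))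
  have h2 : ∑ j ∈ Finset.Ioc k n, m j ≤ ∑ j2 ∈ Finset.Ioc k n, min (m k) (m j2) := by
    apply Finset.sum_le_sum
    intro j2 hj2
    simp only [Finset.mem_Ioc] at hj2
    exact le_min (hkmax j2 (hmem _ (by omega) hj2.2)) le_rfl
  have hka : m k ≤ a := hma k hk
  linarith

/-- **Eq. (10)**: the experimentally testable bound on the ratio of classical-to-quantum
overlaps. If `κ_0 · ω_Q(ψ_0, ψ_j) ≤ ∫ min(μ_0, μ_j) dν` for all `j`, then `κ_0` is bounded by
`(1 + ∑_{j1<j2} (p_0 + p_1 + p_2)) / ∑_j ω_Q(ψ_0, ψ_j)`. -/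
theorem eq10 {Λ : Type*} [MeasurableSpace Λ] (ν : MeasureTheory.Measure Λ)
    (d n : ℕ) (hn : 2 ≤ n)
    (μ : ℕ → Λ → ℝ)
    (hμ_meas : ∀ j, j ≤ n → Measurable (μ j))
    (hμ_nonneg : ∀ j, j ≤ n → ∀ l, 0 ≤ μ j l)
    (hμ_norm : ∀ j, j ≤ n → ∫ l, μ j l ∂ν = 1)
    (ξ : ℕ → ℕ → Fin 3 → Λ → ℝ)
    (hξ_meas : ∀ j1 j2, 1 ≤ j1 → j1 < j2 → j2 ≤ n → ∀ i, Measurable (ξ j1 j2 i))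
    (hξ_nonneg : ∀ j1 j2, 1 ≤ j1 → j1 < j2 → j2 ≤ n → ∀ i l, 0 ≤ ξ j1 j2 i l)
    (hξ_sum : ∀ j1 j2, 1 ≤ j1 → j1 < j2 → j2 ≤ n →
      ∀ l, ξ j1 j2 0 l + ξ j1 j2 1 l + ξ j1 j2 2 l = 1)
    (ψ : ℕ → EuclideanSpace ℂ (Fin d))
    (hunit : ∀ j, j ≤ n → ‖ψ j‖ = 1)
    (hne : ∀ j, 1 ≤ j → j ≤ n → (inner ℂ (ψ 0) (ψ j) : ℂ) ≠ 0)
    (κ₀ : ℝ)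
    (hκ₀ : ∀ j, 1 ≤ j → j ≤ n →
      κ₀ * omegaQ (ψ 0) (ψ j) ≤ ∫ l, min (μ 0 l) (μ j l) ∂ν) :
    κ₀ ≤ (1 + ∑ j1 ∈ Finset.Icc 1 n, ∑ j2 ∈ Finset.Ioc j1 n,
        ((∫ l, ξ j1 j2 0 l * μ 0 l ∂ν) + (∫ l, ξ j1 j2 1 l * μ j1 l ∂ν) +
          (∫ l, ξ j1 j2 2 l * μ j2 l ∂ν))) /
      (∑ j ∈ Finset.Icc 1 n, omegaQ (ψ 0) (ψ j)) := by
  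
  have hn1 : 1 ≤ n := by omega
  -- integrability of densities
  have hint : ∀ j, j ≤ n → MeasureTheory.Integrable (μ j) ν := by
    intro j hj
    by_contra h
    have := hμ_norm j hj
    rw [MeasureTheory.integral_undef h] at this
    norm_num at this
  -- integrability of pairwise mins
  have hint2 : ∀ j, j ≤ n → MeasureTheory.Integrable (fun l => min (μ 0 l) (μ j l)) ν := by
    intro j hj
    apply (hint 0 (by omega)).mono
      ((hμ_meas 0 (by omega)).min (hμ_meas j hj)).aestronglyMeasurable
    filter_upwards with l
    rw [Real.norm_eq_abs, Real.norm_eq_abs,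
      abs_of_nonneg (le_min (hμ_nonneg 0 (by omega) l) (hμ_nonneg j hj l)),
      abs_of_nonneg (hμ_nonneg 0 (by omega) l)]
    exact min_le_left _ _
  -- integrability of triple mins
  have hint3 : ∀ j1 j2, j1 ≤ n → j2 ≤ n →
      MeasureTheory.Integrable (fun l => min (μ 0 l) (min (μ j1 l) (μ j2 l))) ν := by
    intro j1 j2 h1 h2
    apply (hint 0 (by omega)).mono
      ((hμ_meas 0 (by omega)).min ((hμ_meas j1 h1).min (hμ_meas j2 h2))).aestronglyMeasurable
    filter_upwards with l
    rw [Real.norm_eq_abs, Real.norm_eq_abs,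
      abs_of_nonneg (le_min (hμ_nonneg 0 (by omega) l)
        (le_min (hμ_nonneg j1 h1 l) (hμ_nonneg j2 h2 l))),
      abs_of_nonneg (hμ_nonneg 0 (by omega) l)]
    exact min_le_left _ _
  -- ξ bounded by 1
  have hξle1 : ∀ j1 j2, 1 ≤ j1 → j1 < j2 → j2 ≤ n → ∀ i l, ξ j1 j2 i l ≤ 1 := by
    intro j1 j2 h1 h12 h2 i l
    have hs := hξ_sum j1 j2 h1 h12 h2 l
    have h0 := hξ_nonneg j1 j2 h1 h12 h2 0 l
    have ha := hξ_nonneg j1 j2 h1 h12 h2 1 l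
    have hb := hξ_nonneg j1 j2 h1 h12 h2 2 l
    fin_cases i
    · show ξ j1 j2 0 l ≤ 1; linarith
    · show ξ j1 j2 1 l ≤ 1; linarith
    · show ξ j1 j2 2 l ≤ 1; linarith
  -- integrability of ξ * μ
  have hintξ : ∀ j1 j2, 1 ≤ j1 → j1 < j2 → j2 ≤ n → ∀ i : Fin 3, ∀ j, j ≤ n →
      MeasureTheory.Integrable (fun l => ξ j1 j2 i l * μ j l) ν := by
    intro j1 j2 h1 h12 h2 i j hj
    apply (hint j hj).mono
      ((hξ_meas j1 j2 h1 h12 h2 i).mul (hμ_meas j hj)).aestronglyMeasurable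
    filter_upwards with l
    rw [Real.norm_eq_abs, Real.norm_eq_abs, Pi.mul_apply,
      abs_of_nonneg (mul_nonneg (hξ_nonneg j1 j2 h1 h12 h2 i l) (hμ_nonneg j hj l)),
      abs_of_nonneg (hμ_nonneg j hj l)]
    nlinarith [hξle1 j1 j2 h1 h12 h2 i l, hξ_nonneg j1 j2 h1 h12 h2 i l, hμ_nonneg j hj l]
  -- per-pair bound: ∫ min3 ≤ p0 + p1 + p2
  have hpair : ∀ j1 j2, 1 ≤ j1 → j1 < j2 → j2 ≤ n →
      (∫ l, min (μ 0 l) (min (μ j1 l) (μ j2 l)) ∂ν) ≤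
        (∫ l, ξ j1 j2 0 l * μ 0 l ∂ν) + (∫ l, ξ j1 j2 1 l * μ j1 l ∂ν) +
          (∫ l, ξ j1 j2 2 l * μ j2 l ∂ν) := by
    intro j1 j2 h1 h12 h2
    have hb : j1 ≤ n := by omega
    have hI0 := hintξ j1 j2 h1 h12 h2 0 0 (by omega)
    have hI1 := hintξ j1 j2 h1 h12 h2 1 j1 hb
    have hI2 := hintξ j1 j2 h1 h12 h2 2 j2 h2
    have heq : (∫ l, (ξ j1 j2 0 l * μ 0 l + ξ j1 j2 1 l * μ j1 l + ξ j1 j2 2 l * μ j2 l) ∂ν)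
        = (∫ l, ξ j1 j2 0 l * μ 0 l ∂ν) + (∫ l, ξ j1 j2 1 l * μ j1 l ∂ν) +
          (∫ l, ξ j1 j2 2 l * μ j2 l ∂ν) := by
      have hI01 : MeasureTheory.Integrable
          (fun l => ξ j1 j2 0 l * μ 0 l + ξ j1 j2 1 l * μ j1 l) ν := hI0.add hI1
      rw [MeasureTheory.integral_add hI01 hI2, MeasureTheory.integral_add hI0 hI1]
    rw [← heq]
    apply MeasureTheory.integral_mono (hint3 j1 j2 hb h2) ((hI0.add hI1).add hI2)
    intro l
    have hs := hξ_sum j1 j2 h1 h12 h2 l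
    have h0 := hξ_nonneg j1 j2 h1 h12 h2 0 l
    have ha := hξ_nonneg j1 j2 h1 h12 h2 1 l
    have hb' := hξ_nonneg j1 j2 h1 h12 h2 2 l
    have hm0 : min (μ 0 l) (min (μ j1 l) (μ j2 l)) ≤ μ 0 l := min_le_left _ _
    have hm1 : min (μ 0 l) (min (μ j1 l) (μ j2 l)) ≤ μ j1 l :=
      le_trans (min_le_right _ _) (min_le_left _ _)
    have hm2 : min (μ 0 l) (min (μ j1 l) (μ j2 l)) ≤ μ j2 l :=
      le_trans (min_le_right _ _) (min_le_right _ _)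
    have : min (μ 0 l) (min (μ j1 l) (μ j2 l))
        = ξ j1 j2 0 l * min (μ 0 l) (min (μ j1 l) (μ j2 l))
        + ξ j1 j2 1 l * min (μ 0 l) (min (μ j1 l) (μ j2 l))
        + ξ j1 j2 2 l * min (μ 0 l) (min (μ j1 l) (μ j2 l)) := by
      rw [← add_mul, ← add_mul, hs, one_mul]
    simp only [Pi.add_apply]
    rw [this]
    gcongr
  -- main sum bound
  have hmain : ∑ j ∈ Finset.Icc 1 n, (∫ l, min (μ 0 l) (μ j l) ∂ν) ≤
      1 + ∑ j1 ∈ Finset.Icc 1 n, ∑ j2 ∈ Finset.Ioc j1 n,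
        ((∫ l, ξ j1 j2 0 l * μ 0 l ∂ν) + (∫ l, ξ j1 j2 1 l * μ j1 l ∂ν) +
          (∫ l, ξ j1 j2 2 l * μ j2 l ∂ν)) := by
    have step1 : ∑ j ∈ Finset.Icc 1 n, (∫ l, min (μ 0 l) (μ j l) ∂ν) ≤
        1 + ∑ j1 ∈ Finset.Icc 1 n, ∑ j2 ∈ Finset.Ioc j1 n,
          (∫ l, min (μ 0 l) (min (μ j1 l) (μ j2 l)) ∂ν) := by
      have hL : ∑ j ∈ Finset.Icc 1 n, (∫ l, min (μ 0 l) (μ j l) ∂ν)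
          = ∫ l, ∑ j ∈ Finset.Icc 1 n, min (μ 0 l) (μ j l) ∂ν := by
        rw [MeasureTheory.integral_finset_sum]
        intro j hj
        exact hint2 j (Finset.mem_Icc.mp hj).2
      have hR : 1 + ∑ j1 ∈ Finset.Icc 1 n, ∑ j2 ∈ Finset.Ioc j1 n,
            (∫ l, min (μ 0 l) (min (μ j1 l) (μ j2 l)) ∂ν)
          = ∫ l, (μ 0 l + ∑ j1 ∈ Finset.Icc 1 n, ∑ j2 ∈ Finset.Ioc j1 n,
              min (μ 0 l) (min (μ j1 l) (μ j2 l))) ∂ν := by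
        have hI : ∀ j1 ∈ Finset.Icc 1 n, MeasureTheory.Integrable
            (fun l => ∑ j2 ∈ Finset.Ioc j1 n, min (μ 0 l) (min (μ j1 l) (μ j2 l))) ν := by
          intro j1 hj1
          apply MeasureTheory.integrable_finset_sum
          intro j2 hj2
          exact hint3 j1 j2 (Finset.mem_Icc.mp hj1).2 (Finset.mem_Ioc.mp hj2).2
        rw [MeasureTheory.integral_add (hint 0 (by omega))
          (MeasureTheory.integrable_finset_sum _ hI), hμ_norm 0 (by omega)]
        congr 1
        rw [MeasureTheory.integral_finset_sum _ hI]
        apply Finset.sum_congr rfl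
        intro j1 hj1
        rw [MeasureTheory.integral_finset_sum]
        intro j2 hj2
        exact hint3 j1 j2 (Finset.mem_Icc.mp hj1).2 (Finset.mem_Ioc.mp hj2).2
      rw [hL, hR]
      apply MeasureTheory.integral_mono
      · apply MeasureTheory.integrable_finset_sum
        intro j hj
        exact hint2 j (Finset.mem_Icc.mp hj).2
      · apply MeasureTheory.Integrable.add (hint 0 (by omega))
        apply MeasureTheory.integrable_finset_sum
        intro j1 hj1
        apply MeasureTheory.integrable_finset_sum
        intro j2 hj2
        exact hint3 j1 j2 (Finset.mem_Icc.mp hj1).2 (Finset.mem_Ioc.mp hj2).2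
      intro l
      have key := sum_min_aux n hn1 (μ 0 l) (fun j => min (μ 0 l) (μ j l))
        (fun j hj => le_min (hμ_nonneg 0 (by omega) l)
          (hμ_nonneg j (Finset.mem_Icc.mp hj).2 l))
        (fun j _ => min_le_left _ _)
      simp only at key ⊢
      have heq : ∀ j1 j2 : ℕ, min (min (μ 0 l) (μ j1 l)) (min (μ 0 l) (μ j2 l))
          = min (μ 0 l) (min (μ j1 l) (μ j2 l)) := by
        intro j1 j2
        rw [min_min_min_comm, min_self]
      calc ∑ j ∈ Finset.Icc 1 n, min (μ 0 l) (μ j l)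
          ≤ μ 0 l + ∑ j1 ∈ Finset.Icc 1 n, ∑ j2 ∈ Finset.Ioc j1 n,
              min (min (μ 0 l) (μ j1 l)) (min (μ 0 l) (μ j2 l)) := key
        _ = μ 0 l + ∑ j1 ∈ Finset.Icc 1 n, ∑ j2 ∈ Finset.Ioc j1 n,
              min (μ 0 l) (min (μ j1 l) (μ j2 l)) := by
            congr 1
            exact Finset.sum_congr rfl fun j1 _ => Finset.sum_congr rfl fun j2 _ => heq j1 j2
    refine le_trans step1 ?_
    gcongr with j1 hj1 j2 hj2
    exact hpair j1 j2 (Finset.mem_Icc.mp hj1).1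
      (Finset.mem_Ioc.mp hj2).1 (Finset.mem_Ioc.mp hj2).2
  -- positivity of ωQ
  have hωpos : ∀ j, 1 ≤ j → j ≤ n → 0 < omegaQ (ψ 0) (ψ j) := by
    intro j h1 h2
    unfold omegaQ
    have ht : 0 < ‖(inner ℂ (ψ 0) (ψ j) : ℂ)‖ ^ 2 :=
      pow_pos (norm_pos_iff.mpr (hne j h1 h2)) 2
    have : Real.sqrt (1 - ‖(inner ℂ (ψ 0) (ψ j) : ℂ)‖ ^ 2) < 1 := by
      rw [Real.sqrt_lt' one_pos]
      nlinarith
    linarith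
  have hdenpos : 0 < ∑ j ∈ Finset.Icc 1 n, omegaQ (ψ 0) (ψ j) := by
    apply Finset.sum_pos
    · intro j hj
      exact hωpos j (Finset.mem_Icc.mp hj).1 (Finset.mem_Icc.mp hj).2
    · exact ⟨1, by simp [hn1]⟩
  rw [le_div_iff₀ hdenpos, Finset.mul_sum]
  calc ∑ j ∈ Finset.Icc 1 n, κ₀ * omegaQ (ψ 0) (ψ j)
      ≤ ∑ j ∈ Finset.Icc 1 n, (∫ l, min (μ 0 l) (μ j l) ∂ν) := by
        apply Finset.sum_le_sum
        intro j hj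
        exact hκ₀ j (Finset.mem_Icc.mp hj).1 (Finset.mem_Icc.mp hj).2
    _ ≤ _ := hmain
end
end

section
/- Let d ≥ 2 and let an ontological model for projective measurements on ℂ^d reproduce quantum measurement statistics. Then for all unit vectors ψ, φ ∈ ℂ^d, the classical overlap does not exceed the quantum overlap: ω_C(ψ, φ) ≤ ω_Q(ψ, φ), i.e., ∫ min(μ_ψ, μ_φ) dν ≤ 1 − √(1 − |⟨ψ, φ⟩|²). -/
noncomputable section

open MeasureTheory

attribute [instance] OntModel.ms

lemma integrable_mu {d : ℕ} (m : OntModel d) (ψ : EuclideanSpace ℂ (Fin d)) (hψ : ‖ψ‖ = 1) :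
    Integrable (m.μ ψ) m.ν := by
  by_contra h
  have h1 := m.μ_norm ψ hψ
  rw [integral_undef h] at h1
  norm_num at h1

lemma integrable_min {d : ℕ} (m : OntModel d) (ψ φ : EuclideanSpace ℂ (Fin d))
    (hψ : ‖ψ‖ = 1) :
    Integrable (fun l => min (m.μ ψ l) (m.μ φ l)) m.ν := by
  refine (integrable_mu m ψ hψ).mono' (((m.μ_meas ψ).min (m.μ_meas φ)).aestronglyMeasurable)
    (MeasureTheory.ae_of_all _ fun l => ?_)
  rw [Real.norm_eq_abs, abs_of_nonneg (le_min (m.μ_nonneg ψ l) (m.μ_nonneg φ l))]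
  exact min_le_left _ _

lemma omegaC_le_sum {d : ℕ} (m : OntModel d) (hm : Reproduces m)
    (ψ φ : EuclideanSpace ℂ (Fin d)) (hψ : ‖ψ‖ = 1) (hφ : ‖φ‖ = 1)
    (M : Fin d → EuclideanSpace ℂ (Fin d)) (hM : Orthonormal ℂ M) :
    omegaC m ψ φ ≤ ∑ i, min (‖(inner ℂ (M i) ψ : ℂ)‖ ^ 2) (‖(inner ℂ (M i) φ : ℂ)‖ ^ 2) := by
  set g : m.Lam → ℝ := fun l => min (m.μ ψ l) (m.μ φ l) with hg
  have hg_nonneg : ∀ l, 0 ≤ g l := fun l => le_min (m.μ_nonneg ψ l) (m.μ_nonneg φ l)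
  have hg_int : Integrable g m.ν := integrable_min m ψ φ hψ
  have hξ_le : ∀ i l, m.ξ M i l ≤ 1 := by
    intro i l
    calc m.ξ M i l ≤ ∑ j, m.ξ M j l :=
          Finset.single_le_sum (fun j _ => m.ξ_nonneg M j l) (Finset.mem_univ i)
    _ = 1 := m.ξ_sum M hM l
  have key : ∀ (f : m.Lam → ℝ), Measurable f → (∀ l, 0 ≤ f l) → Integrable f m.ν →
      ∀ i, Integrable (fun l => m.ξ M i l * f l) m.ν := by
    intro f hf hf0 hfi i
    refine hfi.mono' ((m.ξ_meas M i).mul hf).aestronglyMeasurable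
      (MeasureTheory.ae_of_all _ fun l => ?_)
    rw [Real.norm_eq_abs, abs_of_nonneg (mul_nonneg (m.ξ_nonneg M i l) (hf0 l))]
    calc m.ξ M i l * f l ≤ 1 * f l :=
          mul_le_mul_of_nonneg_right (hξ_le i l) (hf0 l)
    _ = f l := one_mul _
  have hgig : ∀ i, Integrable (fun l => m.ξ M i l * g l) m.ν :=
    key g (((m.μ_meas ψ).min (m.μ_meas φ))) hg_nonneg hg_int
  have step1 : omegaC m ψ φ = ∑ i, ∫ l, m.ξ M i l * g l ∂m.ν := by
    rw [omegaC, ← integral_finset_sum _ (fun i _ => hgig i)]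
    refine integral_congr_ae (MeasureTheory.ae_of_all _ fun l => ?_)
    show min (m.μ ψ l) (m.μ φ l) = ∑ i, m.ξ M i l * g l
    rw [← Finset.sum_mul, m.ξ_sum M hM l, one_mul]
  rw [step1]
  refine Finset.sum_le_sum fun i _ => ?_
  have hb : ∀ (χ : EuclideanSpace ℂ (Fin d)), ‖χ‖ = 1 → (∀ l, g l ≤ m.μ χ l) →
      ∫ l, m.ξ M i l * g l ∂m.ν ≤ ‖(inner ℂ (M i) χ : ℂ)‖ ^ 2 := by
    intro χ hχ hgle
    have h2 : ∫ l, m.ξ M i l * g l ∂m.ν ≤ ∫ l, m.ξ M i l * m.μ χ l ∂m.ν := by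
      refine integral_mono (hgig i) (key (m.μ χ) (m.μ_meas χ) (m.μ_nonneg χ)
        (integrable_mu m χ hχ) i) fun l => ?_
      exact mul_le_mul_of_nonneg_left (hgle l) (m.ξ_nonneg M i l)
    rw [hm χ hχ M hM i] at h2
    exact h2
  exact le_min (hb ψ hψ fun l => min_le_left _ _) (hb φ hφ fun l => min_le_right _ _)

open Finset in
lemma exists_good_basis (d : ℕ) (hd : 2 ≤ d)
    (ψ φ : EuclideanSpace ℂ (Fin d)) (hψ : ‖ψ‖ = 1) (hφ : ‖φ‖ = 1)
    (hlt : ‖(inner ℂ ψ φ : ℂ)‖ < 1) :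
    ∃ M : Fin d → EuclideanSpace ℂ (Fin d), Orthonormal ℂ M ∧
      ∑ i, min (‖(inner ℂ (M i) ψ : ℂ)‖ ^ 2) (‖(inner ℂ (M i) φ : ℂ)‖ ^ 2) ≤ omegaQ ψ φ := by
  obtain ⟨k, rfl⟩ : ∃ k, d = k + 2 := ⟨d - 2, by omega⟩
  set c : ℂ := inner ℂ ψ φ with hc
  set r : ℝ := ‖c‖ with hrdef
  have hr0 : 0 ≤ r := norm_nonneg _
  have hr1 : r < 1 := hlt
  clear_value c r
  -- phase
  set a : ℂ := if c = 0 then 1 else (r : ℂ) / c with hadef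
  clear_value a
  have ha : ‖a‖ = 1 := by
    rw [hadef]
    by_cases h : c = 0
    · simp [h]
    · rw [if_neg h, norm_div, Complex.norm_real, Real.norm_eq_abs, abs_of_nonneg hr0, ← hrdef]
      have : r ≠ 0 := by simpa [hrdef] using h
      field_simp
  have ha0 : a ≠ 0 := by
    intro h; rw [h] at ha; simp at ha
  set φt := a • φ with hφtdef
  clear_value φt
  have h3 : (inner ℂ ψ φt : ℂ) = (r : ℂ) := by
    rw [hφtdef, inner_smul_right, ← hc]
    by_cases h : c = 0
    · simp [hadef, h, hrdef, hc]
    · rw [hadef, if_neg h]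
      field_simp
  have h1 : (inner ℂ ψ ψ : ℂ) = 1 := by
    rw [inner_self_eq_norm_sq_to_K, hψ]; norm_num
  have h2 : (inner ℂ φt φt : ℂ) = 1 := by
    rw [inner_self_eq_norm_sq_to_K, hφtdef, norm_smul, ha, hφ]; norm_num
  have h4 : (inner ℂ φt ψ : ℂ) = (r : ℂ) := by
    rw [← inner_conj_symm, h3, Complex.conj_ofReal]
  set s : ℝ := Real.sqrt (1 - r ^ 2) with hsdef
  have hs2 : s ^ 2 = 1 - r ^ 2 := Real.sq_sqrt (by nlinarith)
  have hs_pos : 0 < s := Real.sqrt_pos.mpr (by nlinarith)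
  have hs_le1 : s ≤ 1 := by nlinarith
  have hsC : (s : ℂ) ≠ 0 := by exact_mod_cast hs_pos.ne'
  have hs2c : ((s : ℂ)) ^ 2 = 1 - (r : ℂ) ^ 2 := by exact_mod_cast hs2
  clear_value s
  set w := φt - (r : ℂ) • ψ with hwdef
  clear_value w
  have hψw : (inner ℂ ψ w : ℂ) = 0 := by
    simp only [hwdef, inner_sub_right, inner_smul_right, h3, h1]; ring
  have hwψ : (inner ℂ w ψ : ℂ) = 0 := by
    simp only [hwdef, inner_sub_left, inner_smul_left, h4, h1, Complex.conj_ofReal]; ring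
  have hww : (inner ℂ w w : ℂ) = ((s : ℂ)) ^ 2 := by
    simp only [hwdef, inner_sub_left, inner_sub_right, inner_smul_left, inner_smul_right,
      h1, h2, h3, h4, Complex.conj_ofReal]
    rw [hs2c]; ring
  have hwφt : (inner ℂ w φt : ℂ) = 1 - (r : ℂ) ^ 2 := by
    simp only [hwdef, inner_sub_left, inner_smul_left, h2, h3, h4, Complex.conj_ofReal]; ring
  set e := ((s : ℂ))⁻¹ • w with hedef
  clear_value e
  have hψe : (inner ℂ ψ e : ℂ) = 0 := by
    simp only [hedef, inner_smul_right, hψw]; ring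
  have heψ : (inner ℂ e ψ : ℂ) = 0 := by
    simp only [hedef, inner_smul_left, hwψ]; ring
  have hee : (inner ℂ e e : ℂ) = 1 := by
    simp only [hedef, inner_smul_left, inner_smul_right, hww, map_inv₀, Complex.conj_ofReal]
    field_simp
  have heφt : (inner ℂ e φt : ℂ) = (s : ℂ) := by
    simp only [hedef, inner_smul_left, hwφt, map_inv₀, Complex.conj_ofReal, ← hs2c]
    field_simp [sq]
  -- the rotation coefficients
  set p : ℝ := Real.sqrt ((1 - s) / 2) with hpdef
  set q : ℝ := Real.sqrt ((1 + s) / 2) with hqdef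
  have hp0 : 0 ≤ p := Real.sqrt_nonneg _
  have hq0 : 0 ≤ q := Real.sqrt_nonneg _
  have hp2 : p ^ 2 = (1 - s) / 2 := by rw [hpdef]; exact Real.sq_sqrt (by linarith)
  have hq2 : q ^ 2 = (1 + s) / 2 := by rw [hqdef]; exact Real.sq_sqrt (by linarith)
  have hpq : p * q = r / 2 := by
    rw [hpdef, hqdef, ← Real.sqrt_mul (by linarith)]
    have : (1 - s) / 2 * ((1 + s) / 2) = (r / 2) ^ 2 := by linear_combination (-1/4 : ℝ) * hs2
    rw [this, Real.sqrt_sq (by linarith)]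
  have hp2c : (p : ℂ) ^ 2 = (1 - (s : ℂ)) / 2 := by exact_mod_cast hp2
  have hq2c : (q : ℂ) ^ 2 = (1 + (s : ℂ)) / 2 := by exact_mod_cast hq2
  have hpqc : (p : ℂ) * (q : ℂ) = (r : ℂ) / 2 := by exact_mod_cast hpq
  clear_value p q
  set m0 := (p : ℂ) • ψ + (q : ℂ) • e with hm0def
  set m1 := (q : ℂ) • ψ - (p : ℂ) • e with hm1def
  clear_value m0 m1
  have h00 : (inner ℂ m0 m0 : ℂ) = 1 := by
    simp only [hm0def, inner_add_left, inner_add_right, inner_smul_left, inner_smul_right,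
      h1, hψe, heψ, hee, Complex.conj_ofReal]
    linear_combination hp2c + hq2c
  have h11 : (inner ℂ m1 m1 : ℂ) = 1 := by
    simp only [hm1def, inner_sub_left, inner_sub_right, inner_smul_left, inner_smul_right,
      h1, hψe, heψ, hee, Complex.conj_ofReal]
    linear_combination hp2c + hq2c
  have h01 : (inner ℂ m0 m1 : ℂ) = 0 := by
    simp only [hm0def, hm1def, inner_add_left, inner_sub_right, inner_smul_left,
      inner_smul_right, h1, hψe, heψ, hee, Complex.conj_ofReal]
    ring
  have h10 : (inner ℂ m1 m0 : ℂ) = 0 := by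
    rw [← inner_conj_symm, h01]; simp
  have hm0ψ : (inner ℂ m0 ψ : ℂ) = (p : ℂ) := by
    simp only [hm0def, inner_add_left, inner_smul_left, h1, heψ, Complex.conj_ofReal]
    ring
  have hm1φt : (inner ℂ m1 φt : ℂ) = (q : ℂ) * (r : ℂ) - (p : ℂ) * (s : ℂ) := by
    simp only [hm1def, inner_sub_left, inner_smul_left, h3, heφt, Complex.conj_ofReal]
  -- build the orthonormal basis extending (m0, m1)
  classical
  have h01' : (0 : Fin (k + 2)) ≠ 1 := by simp [Fin.ext_iff]
  set v : Fin (k + 2) → EuclideanSpace ℂ (Fin (k + 2)) :=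
    fun i => if i = 0 then m0 else if i = 1 then m1 else 0 with hvdef
  have hv : Orthonormal ℂ (({0, 1} : Set (Fin (k + 2))).restrict v) := by
    have hn0 : ‖m0‖ = 1 := by
      rw [@norm_eq_sqrt_re_inner ℂ, h00]; simp
    have hn1 : ‖m1‖ = 1 := by
      rw [@norm_eq_sqrt_re_inner ℂ, h11]; simp
    rw [orthonormal_iff_ite]
    rintro ⟨i, hi⟩ ⟨j, hj⟩
    simp only [Set.mem_insert_iff, Set.mem_singleton_iff] at hi hj
    rcases hi with rfl | rfl <;> rcases hj with rfl | rfl <;>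
      simp [Set.restrict, hn0, hn1, hvdef, h01', h01'.symm, h00, h11, h01, h10, Subtype.ext_iff]
  obtain ⟨b, hb⟩ := hv.exists_orthonormalBasis_extension_of_card_eq
    (by simp [finrank_euclideanSpace_fin])
  have hb0 : b 0 = m0 := by rw [hb 0 (by simp)]; simp [hvdef]
  have hb1 : b 1 = m1 := by rw [hb 1 (by simp)]; simp [hvdef, h01'.symm]
  refine ⟨⇑b, b.orthonormal, ?_⟩
  have hON := orthonormal_iff_ite.mp b.orthonormal
  have hψ_eq : ψ = (p : ℂ) • m0 + (q : ℂ) • m1 := by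
    have hco : (p : ℂ) ^ 2 + (q : ℂ) ^ 2 = 1 := by linear_combination hp2c + hq2c
    have hmod : (p : ℂ) • ((p : ℂ) • ψ + (q : ℂ) • e) + (q : ℂ) • ((q : ℂ) • ψ - (p : ℂ) • e)
        = ((p : ℂ) ^ 2 + (q : ℂ) ^ 2) • ψ := by module
    rw [hm0def, hm1def, hmod, hco, one_smul]
  have hbiψ : ∀ i : Fin (k + 2), i ≠ 0 → i ≠ 1 → (inner ℂ (b i) ψ : ℂ) = 0 := by
    intro i hi0 hi1
    rw [hψ_eq, inner_add_right, inner_smul_right, inner_smul_right, ← hb0, ← hb1,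
      hON i 0, hON i 1]
    simp [hi0, hi1]
  have t0 : ‖(inner ℂ (b 0) ψ : ℂ)‖ ^ 2 = (1 - s) / 2 := by
    rw [hb0, hm0ψ, Complex.norm_real, Real.norm_eq_abs, sq_abs, hp2]
  have t1 : ‖(inner ℂ (b 1) φ : ℂ)‖ ^ 2 = (1 - s) / 2 := by
    have e1 : (inner ℂ m1 φt : ℂ) = a * (inner ℂ m1 φ : ℂ) := by
      rw [hφtdef, inner_smul_right]
    have e2 : ‖(inner ℂ m1 φ : ℂ)‖ = ‖(inner ℂ m1 φt : ℂ)‖ := by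
      rw [e1, norm_mul, ha, one_mul]
    have e3 : ((q : ℂ) * (r : ℂ) - (p : ℂ) * (s : ℂ)) = ((q * r - p * s : ℝ) : ℂ) := by
      push_cast; ring
    rw [hb1, e2, hm1φt, e3, Complex.norm_real, Real.norm_eq_abs, sq_abs]
    have hr2 : r ^ 2 = 1 - s ^ 2 := by linarith [hs2]
    linear_combination (r ^ 2) * hq2 + (s ^ 2) * hp2 - (2 * r * s) * hpq + ((1 - s) / 2) * hr2
  set f : Fin (k + 2) → ℝ :=
    fun i => min (‖(inner ℂ (b i) ψ : ℂ)‖ ^ 2) (‖(inner ℂ (b i) φ : ℂ)‖ ^ 2) with hfdef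
  have key0 : f 0 ≤ (1 - s) / 2 := t0 ▸ min_le_left _ _
  have key1 : f 1 ≤ (1 - s) / 2 := t1 ▸ min_le_right _ _
  have keyi : ∀ i : Fin (k + 2), i ≠ 0 → i ≠ 1 → f i = 0 := by
    intro i hi0 hi1
    refine le_antisymm ?_ (le_min (by positivity) (by positivity))
    calc f i ≤ ‖(inner ℂ (b i) ψ : ℂ)‖ ^ 2 := min_le_left _ _
    _ = 0 := by rw [hbiψ i hi0 hi1]; simp
  have h1mem : (1 : Fin (k + 2)) ∈ (Finset.univ.erase (0 : Fin (k + 2))) :=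
    Finset.mem_erase.mpr ⟨h01'.symm, Finset.mem_univ _⟩
  calc ∑ i, f i = f 0 + ∑ i ∈ Finset.univ.erase 0, f i :=
        (Finset.add_sum_erase _ f (Finset.mem_univ 0)).symm
  _ = f 0 + (f 1 + ∑ i ∈ (Finset.univ.erase 0).erase 1, f i) := by
        rw [Finset.add_sum_erase _ f h1mem]
  _ = f 0 + f 1 := by
        rw [Finset.sum_eq_zero, add_zero]
        intro i hi
        have hi1 := (Finset.mem_erase.mp hi).1
        have hi0 := (Finset.mem_erase.mp (Finset.mem_erase.mp hi).2).1
        exact keyi i hi0 hi1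
  _ ≤ (1 - s) / 2 + (1 - s) / 2 := add_le_add key0 key1
  _ = 1 - s := by ring
  _ = omegaQ ψ φ := by rw [omegaQ, hsdef, hrdef, hc]

/-- In any ontological model reproducing quantum measurement statistics on `ℂ^d` (`d ≥ 2`),
the classical overlap of any two unit vectors does not exceed their quantum overlap. -/
theorem omegaC_le_omegaQ (d : ℕ) (hd : 2 ≤ d)
    (m : OntModel d) (hm : Reproduces m)
    (ψ φ : EuclideanSpace ℂ (Fin d)) (hψ : ‖ψ‖ = 1) (hφ : ‖φ‖ = 1) :
    omegaC m ψ φ ≤ omegaQ ψ φ := by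
  have hr_le : ‖(inner ℂ ψ φ : ℂ)‖ ≤ 1 := by
    have h := norm_inner_le_norm (𝕜 := ℂ) ψ φ
    rw [hψ, hφ] at h
    simpa using h
  rcases lt_or_eq_of_le hr_le with hlt | heq
  · obtain ⟨M, hM, hsum⟩ := exists_good_basis d hd ψ φ hψ hφ hlt
    exact (omegaC_le_sum m hm ψ φ hψ hφ M hM).trans hsum
  · have hQ : omegaQ ψ φ = 1 := by
      rw [omegaQ, heq]
      norm_num
    rw [hQ]
    calc omegaC m ψ φ ≤ ∫ l, m.μ ψ l ∂m.ν :=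
          MeasureTheory.integral_mono (integrable_min m ψ φ hψ) (integrable_mu m ψ hψ)
            fun l => min_le_left _ _
    _ = 1 := m.μ_norm ψ hψ
end
end

section
/- Let d ≥ 2 and let ψ, φ be unit vectors in ℂ^d. Then there exist an orthonormal basis (m_0, …, m_{d−1}) of ℂ^d and a subset S ⊆ {0, …, d−1} such that ∑_{i ∈ S} |⟨m_i, ψ⟩|² + ∑_{i ∉ S} |⟨m_i, φ⟩|² = 1 − √(1 − |⟨ψ, φ⟩|²). -/
noncomputable section

open scoped ComplexConjugate

private lemma parseval_aux {d : ℕ} (b : OrthonormalBasis (Fin d) ℂ (EuclideanSpace ℂ (Fin d)))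
    (x : EuclideanSpace ℂ (Fin d)) :
    ∑ i, ‖(inner ℂ (b i) x : ℂ)‖ ^ 2 = ‖x‖ ^ 2 := by
  have h := b.sum_inner_mul_inner x x
  have h2 : ∀ i : Fin d, (inner ℂ x (b i) : ℂ) * inner ℂ (b i) x
      = ((‖(inner ℂ (b i) x : ℂ)‖ ^ 2 : ℝ) : ℂ) := by
    intro i
    rw [← inner_conj_symm (b i) x, RCLike.mul_conj, RCLike.norm_conj]
    norm_cast
  rw [inner_self_eq_norm_sq_to_K] at h
  simp_rw [h2] at h
  have h3 : ((∑ i, ‖(inner ℂ (b i) x : ℂ)‖ ^ 2 : ℝ) : ℂ) = ((‖x‖ ^ 2 : ℝ) : ℂ) := by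
    push_cast
    simpa using h
  exact_mod_cast h3

/-- Existence of the optimal (Helstrom) projective measurement for discriminating two pure
states `ψ, φ` prepared with equal probabilities: there is an orthonormal basis and a grouping
of its outcomes such that the total error probability equals `1 − √(1 − |⟨ψ, φ⟩|²)`. -/
theorem helstrom_measurement (d : ℕ) (hd : 2 ≤ d)
    (ψ φ : EuclideanSpace ℂ (Fin d)) (hψ : ‖ψ‖ = 1) (hφ : ‖φ‖ = 1) :
    ∃ M : Fin d → EuclideanSpace ℂ (Fin d), Orthonormal ℂ M ∧
      ∃ S : Finset (Fin d),
        (∑ i ∈ S, ‖(inner ℂ (M i) ψ : ℂ)‖ ^ 2) + (∑ i ∈ Sᶜ, ‖(inner ℂ (M i) φ : ℂ)‖ ^ 2) =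
          1 - Real.sqrt (1 - ‖(inner ℂ ψ φ : ℂ)‖ ^ 2) := by
  set c : ℂ := inner ℂ ψ φ with hc
  set r : ℝ := ‖c‖ with hr
  set s : ℝ := Real.sqrt (1 - r ^ 2) with hs
  have hr0 : 0 ≤ r := norm_nonneg c
  have hr1 : r ≤ 1 := by
    calc r ≤ ‖ψ‖ * ‖φ‖ := norm_inner_le_norm ψ φ
    _ = 1 := by rw [hψ, hφ]; ring
  have hs0 : 0 ≤ s := Real.sqrt_nonneg _
  have hs2 : s ^ 2 = 1 - r ^ 2 := Real.sq_sqrt (by nlinarith)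
  have hs1 : s ≤ 1 := by nlinarith
  by_cases hsz : s = 0
  · -- degenerate case : |c| = 1, take S = univ
    refine ⟨EuclideanSpace.basisFun (Fin d) ℂ,
      (EuclideanSpace.basisFun (Fin d) ℂ).orthonormal, Finset.univ, ?_⟩
    rw [Finset.compl_univ]
    simp only [Finset.sum_empty, add_zero]
    rw [parseval_aux, hψ, hsz]
    norm_num
  · -- main case
    have hsp : 0 < s := lt_of_le_of_ne hs0 (Ne.symm hsz)
    -- the phase u
    set u : ℂ := if c = 0 then 1 else (r : ℂ)⁻¹ * c with hu
    have hcu : c = (r : ℂ) * u := by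
      by_cases h0 : c = 0
      · simp [hu, h0, hr]
      · have : (r : ℂ) ≠ 0 := by
          simp only [ne_eq, Complex.ofReal_eq_zero, hr, norm_eq_zero]; exact h0
        rw [hu, if_neg h0, ← mul_assoc, mul_inv_cancel₀ this, one_mul]
    have hu1 : ‖u‖ = 1 := by
      by_cases h0 : c = 0
      · simp [hu, h0]
      · have hrne : r ≠ 0 := by simpa [hr, norm_eq_zero] using h0
        have h1 : ‖(r : ℂ)⁻¹ * c‖ = 1 := by
          rw [norm_mul, norm_inv, Complex.norm_real, Real.norm_eq_abs,
            abs_of_nonneg hr0, ← hr, inv_mul_cancel₀ hrne]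
        simpa [hu, h0] using h1
    have huu : (conj u) * u = 1 := by
      rw [RCLike.conj_mul, hu1]
      norm_num
    -- the coefficients
    set a : ℝ := Real.sqrt ((1 - s) / 2) with ha
    set b : ℝ := Real.sqrt ((1 + s) / 2) with hb
    have ha0 : 0 ≤ a := Real.sqrt_nonneg _
    have hb0 : 0 ≤ b := Real.sqrt_nonneg _
    have ha2 : a ^ 2 = (1 - s) / 2 := Real.sq_sqrt (by linarith)
    have hb2 : b ^ 2 = (1 + s) / 2 := Real.sq_sqrt (by linarith)
    have hab : a * b = r / 2 := by
      rw [ha, hb, ← Real.sqrt_mul (by linarith)]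
      have h1 : (1 - s) / 2 * ((1 + s) / 2) = (r / 2) ^ 2 := by nlinarith
      rw [h1, Real.sqrt_sq (by linarith)]
    -- the auxiliary vector v
    set v : EuclideanSpace ℂ (Fin d) := φ - c • ψ with hv
    clear_value v
    have hψψ : (inner ℂ ψ ψ : ℂ) = 1 := by
      rw [inner_self_eq_norm_sq_to_K, hψ]; norm_num
    have hφφ : (inner ℂ φ φ : ℂ) = 1 := by
      rw [inner_self_eq_norm_sq_to_K, hφ]; norm_num
    have hcc : (conj c) * c = ((r ^ 2 : ℝ) : ℂ) := by
      rw [RCLike.conj_mul]; norm_cast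
    have hvψ : (inner ℂ v ψ : ℂ) = 0 := by
      simp only [hv, inner_sub_left, inner_smul_left, hψψ, mul_one]
      rw [hc, inner_conj_symm, sub_self]
    have hψv : (inner ℂ ψ v : ℂ) = 0 := by
      rw [← inner_conj_symm, hvψ, map_zero]
    have hvφ : (inner ℂ v φ : ℂ) = ((s ^ 2 : ℝ) : ℂ) := by
      simp only [hv, inner_sub_left, inner_smul_left, hφφ, ← hc, hcc]
      push_cast [hs2]
      ring
    have hvv : (inner ℂ v v : ℂ) = ((s ^ 2 : ℝ) : ℂ) := by
      nth_rewrite 2 [hv]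
      rw [inner_sub_right, inner_smul_right, hvφ, hvψ, mul_zero, sub_zero]
    -- the measurement vector m0
    set β : ℂ := ((b / s : ℝ) : ℂ) * conj u with hβ
    clear_value β
    set m0 : EuclideanSpace ℂ (Fin d) := (a : ℂ) • ψ + β • v with hm0
    clear_value m0
    have hm0ψ : (inner ℂ m0 ψ : ℂ) = (a : ℂ) := by
      simp only [hm0, inner_add_left, inner_smul_left, hψψ, hvψ, mul_zero, mul_one, add_zero]
      simp [Complex.conj_ofReal]
    have hm0φ : (inner ℂ m0 φ : ℂ) = ((a * r + b * s : ℝ) : ℂ) * u := by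
      simp only [hm0, inner_add_left, inner_smul_left, hvφ, ← hc, hcu, hβ]
      rw [map_mul, Complex.conj_conj, Complex.conj_ofReal, Complex.conj_ofReal]
      have hsne : (s : ℂ) ≠ 0 := by exact_mod_cast hsz
      push_cast
      field_simp
    have hm0m0 : (inner ℂ m0 m0 : ℂ) = 1 := by
      simp only [hm0, inner_add_left, inner_add_right, inner_smul_left, inner_smul_right,
        hψψ, hvψ, hψv, hvv, Complex.conj_ofReal, hβ]
      rw [map_mul, Complex.conj_conj, Complex.conj_ofReal]
      have hsne : (s : ℂ) ≠ 0 := by exact_mod_cast hsz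
      have hb2' : ((b : ℂ)) ^ 2 = ((1 + s : ℝ) : ℂ) / 2 := by
        exact_mod_cast congrArg (fun x : ℝ => (x : ℂ)) hb2
      have ha2' : ((a : ℂ)) ^ 2 = ((1 - s : ℝ) : ℂ) / 2 := by
        exact_mod_cast congrArg (fun x : ℝ => (x : ℂ)) ha2
      push_cast at hb2' ha2' ⊢
      field_simp
      linear_combination (s : ℂ) * ((b:ℂ)^2) * huu + (s : ℂ) * ha2'
        + (s : ℂ) * hb2'
    have hm0norm : ‖m0‖ = 1 := by
      have h1 := inner_self_eq_norm_sq (𝕜 := ℂ) m0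
      rw [hm0m0] at h1
      have h2 : ‖m0‖ ^ 2 = 1 := by simpa using h1.symm
      rw [← Real.sqrt_sq (norm_nonneg m0), h2, Real.sqrt_one]
    -- extend to an orthonormal basis
    have hcard : Module.finrank ℂ (EuclideanSpace ℂ (Fin d)) = Fintype.card (Fin d) := by
      simp [finrank_euclideanSpace]
    have hd0 : 0 < d := by omega
    let i0 : Fin d := ⟨0, hd0⟩
    have horth : Orthonormal ℂ (({i0} : Set (Fin d)).restrict (fun _ => m0)) := by
      constructor
      · intro i; exact hm0norm
      · intro i j hij
        exact absurd (Subtype.ext (i.2.trans j.2.symm)) hij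
    obtain ⟨B, hB⟩ := horth.exists_orthonormalBasis_extension_of_card_eq hcard
    have hB0 : B i0 = m0 := hB i0 rfl
    refine ⟨B, B.orthonormal, {i0}, ?_⟩
    have hsum1 : ∑ i ∈ ({i0} : Finset (Fin d)), ‖(inner ℂ (B i) ψ : ℂ)‖ ^ 2 = a ^ 2 := by
      rw [Finset.sum_singleton, hB0, hm0ψ]
      rw [Complex.norm_real, Real.norm_eq_abs, abs_of_nonneg ha0]
    have hsum2 : ∑ i ∈ ({i0} : Finset (Fin d))ᶜ, ‖(inner ℂ (B i) φ : ℂ)‖ ^ 2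
        = 1 - (a * r + b * s) ^ 2 := by
      have htot := parseval_aux B φ
      rw [hφ] at htot
      have hsplit := Finset.sum_compl_add_sum ({i0} : Finset (Fin d))
        (fun i => ‖(inner ℂ (B i) φ : ℂ)‖ ^ 2)
      rw [htot, Finset.sum_singleton, hB0, hm0φ] at hsplit
      have hnorm : ‖((a * r + b * s : ℝ) : ℂ) * u‖ ^ 2 = (a * r + b * s) ^ 2 := by
        rw [norm_mul, hu1, mul_one, Complex.norm_real, Real.norm_eq_abs,
          abs_of_nonneg (by positivity)]
      rw [hnorm] at hsplit
      linarith
    rw [hsum1, hsum2]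
    linear_combination s ^ 2 * ha2 - s ^ 2 * hb2 - 2 * r * s * hab - (s + a ^ 2) * hs2
end
end
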